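/- Let ψ₀ ∈ (0,1) and a, b ∈ ℝ with 1 + a > 0 and 1 + b > 0. Set p₁ = ψ₀, p₀ = 1 − ψ₀, D = 1 + a·p₁ + b·p₀, q₁ = p₁·(1 + a)/D, and q₀ = p₀·(1 + b)/D. Then D > 0, q₁ ∈ (0,1), q₀ ∈ (0,1), q₁ + q₀ = 1, and for each y ∈ {0,1}: (q_y − p_y)/q_y − a·(p₁/q₁)·(𝟙{y = 1} − q₁) − b·(p₀/q₀)·(𝟙{y = 0} − q₀) = 0, where q_y and p_y denote q₁, p₁ if y = 1 and q₀, p₀ if y = 0, and 𝟙 denotes the indicator function. -/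
import Mathlib


/-- Closed-form solution for the two-dimensional "equalized risk in the cases and
controls" constraint under cross-entropy risk: the tilted probabilities
`q₁ = p₁(1+a)/D`, `q₀ = p₀(1+b)/D` with `D = 1 + a p₁ + b p₀` form a valid
probability distribution on `{0,1}` and solve the vector stationarity equation
pointwise. The binary outcome `y ∈ {0,1}` is encoded as `Bool`. -/
theorem equalized_risk_cases_controls_path
    (ψ₀ a b : ℝ) (hψ₀ : ψ₀ ∈ Set.Ioo (0 : ℝ) 1)
    (ha : 0 < 1 + a) (hb : 0 < 1 + b) :
    let p₁ : ℝ := ψ₀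
    let p₀ : ℝ := 1 - ψ₀
    let D : ℝ := 1 + a * p₁ + b * p₀
    let q₁ : ℝ := p₁ * (1 + a) / D
    let q₀ : ℝ := p₀ * (1 + b) / D
    0 < D ∧ q₁ ∈ Set.Ioo (0 : ℝ) 1 ∧ q₀ ∈ Set.Ioo (0 : ℝ) 1 ∧ q₁ + q₀ = 1 ∧
    ∀ y : Bool,
      ((if y then q₁ else q₀) - (if y then p₁ else p₀)) / (if y then q₁ else q₀)
        - a * (p₁ / q₁) * ((if y then (1 : ℝ) else 0) - q₁)
        - b * (p₀ / q₀) * ((if y then (0 : ℝ) else 1) - q₀) = 0 := by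
  obtain ⟨h0, h1⟩ := hψ₀
  intro p₁ p₀ D q₁ q₀
  have hp₁ : 0 < p₁ := h0
  have hp₀ : 0 < p₀ := by simp only [p₀]; linarith
  have hD : 0 < D := by
    have : D = (1 + a) * p₁ + (1 + b) * p₀ := by simp only [D, p₁, p₀]; ring
    rw [this]; positivity
  have hq₁ : 0 < q₁ := by simp only [q₁]; positivity
  have hq₀ : 0 < q₀ := by simp only [q₀]; positivity
  have hsum : q₁ + q₀ = 1 := by
    simp only [q₁, q₀]
    field_simp
    simp only [D, p₁, p₀]; ring
  refine ⟨hD, ⟨hq₁, by linarith⟩, ⟨hq₀, by linarith⟩, hsum, ?_⟩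
  intro y
  have hD' : D ≠ 0 := ne_of_gt hD
  have hq₁' : q₁ ≠ 0 := ne_of_gt hq₁
  have hq₀' : q₀ ≠ 0 := ne_of_gt hq₀
  cases y <;> simp only [if_true, if_false, Bool.false_eq_true] <;>
    · field_simp
      simp only [q₁, q₀] at *
      field_simp at *
      simp only [D, p₁, p₀] at *
      ring_nf
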